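/- arXiv:1104.5406 — 3 statements merged into one kernel-verified Lean document; each statement's English description precedes it below -/
import Mathlib

section
/- Let G be a countably-based locally compact Hausdorff unimodular group with Haar measure dg, and let ‖·‖ : G → ℝ be a gauge: a continuous function with ‖e‖ = 1, ‖g‖ ≥ 1, ‖g⁻¹‖ = ‖g‖, ‖gh‖ ≤ ‖g‖·‖h‖, and such that ∫_G ‖g‖^{-σ} dg < ∞ for all σ > σ₀. Then for any discrete subgroup Γ ⊂ G and any σ > σ₀, the sum ∑_{γ ∈ Γ} ‖γ‖^{-σ} converges. -/
open MeasureTheory Topology Pointwise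

/-- for a gauge ‖·‖ on a locally compact Hausdorff unimodular group `G`
with Haar measure, and a discrete subgroup `Γ`, the series `∑_{γ ∈ Γ} ‖γ‖^{-σ}`
converges for every `σ > σ₀`. -/
theorem gauge_sum_over_discrete_subgroup_summable
    {G : Type*} [Group G] [TopologicalSpace G] [IsTopologicalGroup G]
    [LocallyCompactSpace G] [T2Space G] [SecondCountableTopology G]
    [MeasurableSpace G] [BorelSpace G]
    (μ : Measure G) [μ.IsHaarMeasure] [μ.IsMulRightInvariant]
    (N : G → ℝ) (hNcont : Continuous N)
    (hN1 : N 1 = 1) (hNge : ∀ g, 1 ≤ N g) (hNinv : ∀ g, N g⁻¹ = N g)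
    (hNsub : ∀ g h, N (g * h) ≤ N g * N h)
    (σ₀ : ℝ) (hσ₀ : 0 < σ₀)
    (hint : ∀ σ : ℝ, σ₀ < σ → Integrable (fun g => (N g) ^ (-σ)) μ)
    (Γ : Subgroup G) (hΓ : DiscreteTopology Γ)
    (σ : ℝ) (hσ : σ₀ < σ) :
    Summable (fun γ : Γ => (N (γ : G)) ^ (-σ)) := by
  have hσpos : 0 < σ := hσ₀.trans hσ
  haveI : Countable Γ := countable_of_Lindelof_of_discrete
  set f : Γ → ℝ := fun γ => (N (γ : G)) ^ (-σ) with hf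
  have hfnonneg : ∀ γ : Γ, 0 ≤ f γ := fun γ =>
    Real.rpow_nonneg (zero_le_one.trans (hNge _)) _
  -- open U in G with U ∩ Γ = {1}
  have h1 : IsOpen ({1} : Set Γ) := isOpen_discrete _
  rw [isOpen_induced_iff] at h1
  obtain ⟨U, hUopen, hU⟩ := h1
  have hU1 : (1 : G) ∈ U := by
    have : ((1 : Γ) : G) ∈ U := by
      have : (1 : Γ) ∈ (Subtype.val ⁻¹' U : Set Γ) := by rw [hU]; rfl
      exact this
    simpa using this
  -- W open, 1 ∈ W, W * W ⊆ U
  obtain ⟨W, hWopen, hW1, hWmul⟩ := exists_open_nhds_one_mul_subset (hUopen.mem_nhds hU1)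
  -- compact K ∈ 𝓝 1 with K ⊆ W ∩ W⁻¹
  have hWinv : (W ∩ (fun x : G => x⁻¹) ⁻¹' W) ∈ 𝓝 (1 : G) := by
    refine Filter.inter_mem (hWopen.mem_nhds hW1) ?_
    exact (hWopen.preimage continuous_inv).mem_nhds (by simpa using hW1)
  obtain ⟨K, hK_nhds, hKsub, hKcomp⟩ := local_compact_nhds hWinv
  have hK1 : (1 : G) ∈ K := mem_of_mem_nhds hK_nhds
  have hKmeas : MeasurableSet K := hKcomp.isClosed.measurableSet
  -- the translates
  set s : Γ → Set G := fun γ => (γ : G) • K with hs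
  have hsmeas : ∀ γ : Γ, MeasurableSet (s γ) := by
    intro γ
    have : IsClosed (s γ) := hKcomp.isClosed.smul (γ : G)
    exact this.measurableSet
  have hdisj : Pairwise (Function.onFun Disjoint s) := by
    intro γ₁ γ₂ hne
    rw [Function.onFun, Set.disjoint_left]
    intro x hx₁ hx₂
    rw [Set.mem_smul_set_iff_inv_smul_mem] at hx₁ hx₂
    set a := (γ₁ : G)⁻¹ * x with ha
    set b := (γ₂ : G)⁻¹ * x with hb
    have hab : ((γ₂ : G)⁻¹ * (γ₁ : G)) = b * a⁻¹ := by
      rw [ha, hb]; group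
    have haW : a⁻¹ ∈ W := (hKsub hx₁).2
    have hbW : b ∈ W := (hKsub hx₂).1
    have hmem : ((γ₂ : G)⁻¹ * (γ₁ : G)) ∈ U := by
      rw [hab]; exact hWmul (Set.mul_mem_mul hbW haW)
    have : (γ₂⁻¹ * γ₁ : Γ) ∈ (Subtype.val ⁻¹' U : Set Γ) := hmem
    rw [hU] at this
    have : γ₂⁻¹ * γ₁ = 1 := this
    exact hne (inv_mul_eq_one.mp this).symm
  -- constants
  obtain ⟨v₀, hv₀K, hC⟩ := hKcomp.exists_isMaxOn ⟨1, hK1⟩ hNcont.continuousOn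
  set C := N v₀ with hCdef
  have hCpos : 0 < C := lt_of_lt_of_le zero_lt_one (hNge v₀)
  have hμKpos : 0 < μ K := μ.measure_pos_of_mem_nhds hK_nhds
  have hμKfin : μ K < ⊤ := hKcomp.measure_lt_top
  -- pointwise bound on each translate
  have hbound : ∀ γ : Γ, ∀ x ∈ s γ, f γ ≤ C ^ σ * N x ^ (-σ) := by
    intro γ x hx
    rw [Set.mem_smul_set_iff_inv_smul_mem] at hx
    have hk : (γ : G)⁻¹ * x ∈ K := hx
    have hNx : N x ≤ N (γ : G) * C := by
      have : x = (γ : G) * ((γ : G)⁻¹ * x) := by group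
      calc N x = N ((γ : G) * ((γ : G)⁻¹ * x)) := by rw [← this]
        _ ≤ N (γ : G) * N ((γ : G)⁻¹ * x) := hNsub _ _
        _ ≤ N (γ : G) * C := by
            exact mul_le_mul_of_nonneg_left (hC hk)
              (zero_le_one.trans (hNge _))
    have hNγ : N x / C ≤ N (γ : G) := by
      rw [div_le_iff₀ hCpos]; exact hNx
    have hpos : 0 < N x / C := div_pos (lt_of_lt_of_le zero_lt_one (hNge x)) hCpos
    have := Real.rpow_le_rpow_of_nonpos hpos hNγ (neg_nonpos.mpr hσpos.le)
    calc f γ ≤ (N x / C) ^ (-σ) := this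
      _ = N x ^ (-σ) / C ^ (-σ) := Real.div_rpow (zero_le_one.trans (hNge x)) hCpos.le (-σ)
      _ = C ^ σ * N x ^ (-σ) := by
          rw [Real.rpow_neg hCpos.le, div_eq_mul_inv, inv_inv, mul_comm]
  -- lintegral lower bound on each translate
  have hkey : ∀ γ : Γ, ENNReal.ofReal (f γ) * μ K ≤
      ENNReal.ofReal (C ^ σ) * ∫⁻ x in s γ, ENNReal.ofReal (N x ^ (-σ)) ∂μ := by
    intro γ
    have hμs : μ (s γ) = μ K := MeasureTheory.measure_smul (μ := μ) (γ : G) K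
    calc ENNReal.ofReal (f γ) * μ K = ∫⁻ _ in s γ, ENNReal.ofReal (f γ) ∂μ := by
          rw [setLIntegral_const, hμs]
      _ ≤ ∫⁻ x in s γ, ENNReal.ofReal (C ^ σ) * ENNReal.ofReal (N x ^ (-σ)) ∂μ := by
          refine setLIntegral_mono' (hsmeas γ) fun x hx => ?_
          rw [← ENNReal.ofReal_mul (Real.rpow_nonneg hCpos.le _)]
          exact ENNReal.ofReal_le_ofReal (hbound γ x hx)
      _ = ENNReal.ofReal (C ^ σ) * ∫⁻ x in s γ, ENNReal.ofReal (N x ^ (-σ)) ∂μ :=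
          lintegral_const_mul' _ _ ENNReal.ofReal_ne_top
  -- sum the bounds
  have hsum : (∑' γ : Γ, ENNReal.ofReal (f γ)) * μ K ≤
      ENNReal.ofReal (C ^ σ) * ∫⁻ x, ENNReal.ofReal (N x ^ (-σ)) ∂μ := by
    rw [← ENNReal.tsum_mul_right]
    calc ∑' γ : Γ, ENNReal.ofReal (f γ) * μ K
        ≤ ∑' γ : Γ, ENNReal.ofReal (C ^ σ) * ∫⁻ x in s γ, ENNReal.ofReal (N x ^ (-σ)) ∂μ :=
          ENNReal.tsum_le_tsum hkey
      _ = ENNReal.ofReal (C ^ σ) * ∑' γ : Γ, ∫⁻ x in s γ, ENNReal.ofReal (N x ^ (-σ)) ∂μ :=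
          ENNReal.tsum_mul_left
      _ = ENNReal.ofReal (C ^ σ) * ∫⁻ x in ⋃ γ : Γ, s γ, ENNReal.ofReal (N x ^ (-σ)) ∂μ := by
          rw [lintegral_iUnion hsmeas hdisj]
      _ ≤ ENNReal.ofReal (C ^ σ) * ∫⁻ x, ENNReal.ofReal (N x ^ (-σ)) ∂μ := by
          gcongr
          exact Measure.restrict_le_self
  have hfin : (∑' γ : Γ, ENNReal.ofReal (f γ)) ≠ ⊤ := by
    intro htop
    have hRHS : ENNReal.ofReal (C ^ σ) * ∫⁻ x, ENNReal.ofReal (N x ^ (-σ)) ∂μ < ⊤ :=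
      ENNReal.mul_lt_top ENNReal.ofReal_lt_top ((hint σ hσ).lintegral_lt_top)
    rw [htop, ENNReal.top_mul hμKpos.ne'] at hsum
    exact hRHS.ne (top_le_iff.mp hsum)
  have := ENNReal.summable_toReal hfin
  refine this.congr fun γ => ?_
  rw [ENNReal.toReal_ofReal (hfnonneg γ)]
end

section
/- Let G, ‖·‖, σ₀ be as in the gauge setup and Γ ⊂ G a discrete subgroup. If f : G → ℂ is continuous and satisfies |f(g)| ≤ C·‖g‖^{-σ} for some σ > σ₀, then the Poincaré series Pé_f(g) = ∑_{γ ∈ Γ} f(γg) converges absolutely, uniformly on compact subsets of G, and |Pé_f(g)| ≪ ‖g‖^{σ} for all g. -/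
open MeasureTheory Filter

/-- if `|f(g)| ≤ C‖g‖^{-σ}` for some `σ > σ₀`, then the Poincaré series
`Pé_f(g) = ∑_{γ∈Γ} f(γg)` converges absolutely, uniformly on compacta,
and `|Pé_f(g)| ≪ ‖g‖^{σ}`. -/
theorem poincare_series_convergence
    {G : Type*} [Group G] [TopologicalSpace G] [IsTopologicalGroup G]
    [LocallyCompactSpace G] [T2Space G] [SecondCountableTopology G]
    [MeasurableSpace G] [BorelSpace G]
    (μ : Measure G) [μ.IsHaarMeasure] [μ.IsMulRightInvariant]
    (N : G → ℝ) (hNcont : Continuous N)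
    (hN1 : N 1 = 1) (hNge : ∀ g, 1 ≤ N g) (hNinv : ∀ g, N g⁻¹ = N g)
    (hNsub : ∀ g h, N (g * h) ≤ N g * N h)
    (σ₀ : ℝ) (hσ₀ : 0 < σ₀)
    (hint : ∀ s : ℝ, σ₀ < s → Integrable (fun g => (N g) ^ (-s)) μ)
    (Γ : Subgroup G) (hΓ : DiscreteTopology Γ)
    (f : G → ℂ) (hf : Continuous f)
    (σ : ℝ) (hσ : σ₀ < σ) (C : ℝ) (hC : 0 < C)
    (hbound : ∀ g, ‖f g‖ ≤ C * (N g) ^ (-σ)) :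
    (∀ g : G, Summable (fun γ : Γ => ‖f ((γ : G) * g)‖)) ∧
    (∀ K : Set G, IsCompact K →
      TendstoUniformlyOn (fun (s : Finset Γ) (g : G) => ∑ γ ∈ s, f ((γ : G) * g))
        (fun g => ∑' γ : Γ, f ((γ : G) * g)) atTop K) ∧
    (∃ C' : ℝ, 0 < C' ∧ ∀ g : G, ‖∑' γ : Γ, f ((γ : G) * g)‖ ≤ C' * (N g) ^ σ) := by
  have hσpos : 0 < σ := hσ₀.trans hσ
  have hNpos : ∀ g, 0 < N g := fun g => lt_of_lt_of_le one_pos (hNge g)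
  -- Step 1: an open set U around 1 meeting Γ only in 1
  have hopen : IsOpen ({(1 : Γ)} : Set Γ) := isOpen_discrete _
  rw [isOpen_induced_iff] at hopen
  obtain ⟨U, hUopen, hU⟩ := hopen
  have h1U : (1 : G) ∈ U := by
    have : (1 : Γ) ∈ Subtype.val ⁻¹' U := by rw [hU]; exact rfl
    simpa using this
  -- Step 2: V open, 1 ∈ V, V * V ⊆ U
  obtain ⟨V, hVopen, h1V, hVU⟩ :=
    exists_open_nhds_one_mul_subset (hUopen.mem_nhds h1U)
  -- symmetric version
  set V₂ : Set G := V ∩ V⁻¹ with hV₂def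
  have hV₂open : IsOpen V₂ := hVopen.inter hVopen.inv
  have h1V₂ : (1 : G) ∈ V₂ := ⟨h1V, by simpa using h1V⟩
  -- Step 3: compact neighborhood K₀ of 1
  obtain ⟨K₀, hK₀comp, hK₀nhds⟩ := exists_compact_mem_nhds (1 : G)
  set W : Set G := K₀ ∩ V₂ with hWdef
  have hWmeas : MeasurableSet W :=
    (hK₀comp.isClosed.measurableSet).inter hV₂open.measurableSet
  have hWne : μ W ≠ ⊤ :=
    (lt_of_le_of_lt (measure_mono Set.inter_subset_left) hK₀comp.measure_lt_top).ne
  have hWpos : 0 < (μ W).toReal := by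
    refine ENNReal.toReal_pos ?_ hWne
    have hopen' : IsOpen (interior K₀ ∩ V₂) := isOpen_interior.inter hV₂open
    have h1' : (1 : G) ∈ interior K₀ ∩ V₂ :=
      ⟨mem_interior_iff_mem_nhds.2 hK₀nhds, h1V₂⟩
    have := hopen'.measure_pos μ ⟨1, h1'⟩
    exact ne_of_gt (lt_of_lt_of_le this (measure_mono fun x hx => ⟨interior_subset hx.1, hx.2⟩))
  -- sup of N on K₀
  have hK₀ne : K₀.Nonempty := ⟨1, mem_of_mem_nhds hK₀nhds⟩
  obtain ⟨x₀, hx₀K, hM⟩ := hK₀comp.exists_isMaxOn hK₀ne hNcont.continuousOn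
  set M : ℝ := N x₀ with hMdef
  have hMpos : 0 < M := hNpos x₀
  have hMσpos : 0 < M ^ (-σ) := Real.rpow_pos_of_pos hMpos _
  -- translated sets
  set T : Γ → Set G := fun γ => (fun g => g * (γ : G)⁻¹) ⁻¹' W with hTdef
  have hTmeas : ∀ γ : Γ, MeasurableSet (T γ) :=
    fun γ => hWmeas.preimage (measurable_mul_const _)
  have hTμ : ∀ γ : Γ, μ (T γ) = μ W :=
    fun γ => measure_preimage_mul_right μ _ W
  -- disjointness
  have hTdis : ∀ γ γ' : Γ, γ ≠ γ' → Disjoint (T γ) (T γ') := by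
    intro γ γ' hne
    rw [Set.disjoint_left]
    intro g hg hg'
    have hw : g * (γ : G)⁻¹ ∈ W := hg
    have hw' : g * (γ' : G)⁻¹ ∈ W := hg'
    have hwV : (g * (γ : G)⁻¹)⁻¹ ∈ V := by
      have : g * (γ : G)⁻¹ ∈ V⁻¹ := hw.2.2
      simpa [Set.mem_inv] using this
    have hw'V : g * (γ' : G)⁻¹ ∈ V := hw'.2.1
    have hmem : (γ : G) * (γ' : G)⁻¹ ∈ U := by
      have : (g * (γ : G)⁻¹)⁻¹ * (g * (γ' : G)⁻¹) ∈ U :=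
        hVU (Set.mul_mem_mul hwV hw'V)
      simpa [mul_assoc] using this
    have : (γ * γ'⁻¹ : Γ) ∈ Subtype.val ⁻¹' U := by
      simpa using hmem
    rw [hU] at this
    have : γ * γ'⁻¹ = 1 := this
    exact hne (mul_inv_eq_one.mp this)
  -- key summability
  have hkey : Summable (fun γ : Γ => N (γ : G) ^ (-σ)) := by
    set B : ℝ := (∫ g, N g ^ (-σ) ∂μ) / (M ^ (-σ) * (μ W).toReal) with hBdef
    refine summable_of_sum_le (c := B) (fun γ => Real.rpow_nonneg (hNpos _).le _) ?_
    intro u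
    rw [le_div_iff₀ (mul_pos hMσpos hWpos)]
    have h1 : ∀ γ ∈ u, (M ^ (-σ) * N (γ : G) ^ (-σ)) * (μ W).toReal
        ≤ ∫ g in T γ, N g ^ (-σ) ∂μ := by
      intro γ _
      have hconst : ∀ g ∈ T γ, M ^ (-σ) * N (γ : G) ^ (-σ) ≤ N g ^ (-σ) := by
        intro g hg
        have hw : g * (γ : G)⁻¹ ∈ W := hg
        have hle : N g ≤ M * N (γ : G) := by
          have h1 : N g = N ((g * (γ : G)⁻¹) * (γ : G)) := by group
          rw [h1]
          exact le_trans (hNsub _ _)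
            (mul_le_mul_of_nonneg_right (hM hw.1) (hNpos _).le)
        have := Real.rpow_le_rpow_of_nonpos
          (hNpos g) hle (neg_nonpos.mpr hσpos.le)
        calc M ^ (-σ) * N (γ : G) ^ (-σ)
            = (M * N (γ : G)) ^ (-σ) := (Real.mul_rpow hMpos.le (hNpos _).le).symm
          _ ≤ N g ^ (-σ) := this
      have := setIntegral_ge_of_const_le (hTmeas γ) (by rw [hTμ γ]; exact hWne)
        hconst ((hint σ hσ).integrableOn)
      rwa [Measure.real, hTμ γ, smul_eq_mul, mul_comm] at this
    have h2 : ∑ γ ∈ u, ∫ g in T γ, N g ^ (-σ) ∂μ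
        = ∫ g in ⋃ γ ∈ u, T γ, N g ^ (-σ) ∂μ := by
      refine (integral_biUnion_finset u (fun γ _ => hTmeas γ) ?_
        (fun γ _ => (hint σ hσ).integrableOn)).symm
      exact fun γ _ γ' _ hne => hTdis γ γ' hne
    have h3 : ∫ g in ⋃ γ ∈ u, T γ, N g ^ (-σ) ∂μ ≤ ∫ g, N g ^ (-σ) ∂μ :=
      setIntegral_le_integral (hint σ hσ)
        (Eventually.of_forall fun g => Real.rpow_nonneg (hNpos g).le _)
    calc (∑ γ ∈ u, N (γ : G) ^ (-σ)) * (M ^ (-σ) * (μ W).toReal)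
        = ∑ γ ∈ u, (M ^ (-σ) * N (γ : G) ^ (-σ)) * (μ W).toReal := by
          rw [Finset.sum_mul]; exact Finset.sum_congr rfl fun γ _ => by ring
      _ ≤ ∑ γ ∈ u, ∫ g in T γ, N g ^ (-σ) ∂μ := Finset.sum_le_sum h1
      _ = ∫ g in ⋃ γ ∈ u, T γ, N g ^ (-σ) ∂μ := h2
      _ ≤ ∫ g, N g ^ (-σ) ∂μ := h3
  -- termwise bound
  have hterm : ∀ g : G, ∀ γ : Γ,
      ‖f ((γ : G) * g)‖ ≤ C * N g ^ σ * N (γ : G) ^ (-σ) := by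
    intro g γ
    have hdiv : N (γ : G) / N g ≤ N ((γ : G) * g) := by
      rw [div_le_iff₀ (hNpos g)]
      have h1 : N (γ : G) = N (((γ : G) * g) * g⁻¹) := by group
      rw [h1]
      calc N (((γ : G) * g) * g⁻¹) ≤ N ((γ : G) * g) * N g⁻¹ := hNsub _ _
        _ = N ((γ : G) * g) * N g := by rw [hNinv]
    have h2 : N ((γ : G) * g) ^ (-σ) ≤ (N (γ : G) / N g) ^ (-σ) :=
      Real.rpow_le_rpow_of_nonpos (div_pos (hNpos _) (hNpos _)) hdiv
        (neg_nonpos.mpr hσpos.le)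
    have h3 : (N (γ : G) / N g) ^ (-σ) = N (γ : G) ^ (-σ) * N g ^ σ := by
      rw [Real.div_rpow (hNpos _).le (hNpos _).le, div_eq_mul_inv,
        ← Real.rpow_neg (hNpos g).le, neg_neg]
    calc ‖f ((γ : G) * g)‖ ≤ C * N ((γ : G) * g) ^ (-σ) := hbound _
      _ ≤ C * (N (γ : G) ^ (-σ) * N g ^ σ) := by
          rw [← h3]; exact mul_le_mul_of_nonneg_left h2 hC.le
      _ = C * N g ^ σ * N (γ : G) ^ (-σ) := by ring
  -- Part 1: summability
  have part1 : ∀ g : G, Summable (fun γ : Γ => ‖f ((γ : G) * g)‖) := by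
    intro g
    exact Summable.of_nonneg_of_le (fun γ => norm_nonneg _) (hterm g)
      (hkey.mul_left (C * N g ^ σ))
  refine ⟨part1, ?_, ?_⟩
  -- Part 2: uniform convergence on compacta
  · intro K hK
    rcases K.eq_empty_or_nonempty with rfl | hKne
    · simp [TendstoUniformlyOn]
    · obtain ⟨y₀, hy₀K, hMK⟩ := hK.exists_isMaxOn hKne hNcont.continuousOn
      refine tendstoUniformlyOn_tsum (hkey.mul_left (C * N y₀ ^ σ)) ?_
      intro γ g hg
      refine le_trans (hterm g γ) ?_
      have : N g ^ σ ≤ N y₀ ^ σ :=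
        Real.rpow_le_rpow (hNpos g).le (hMK hg) hσpos.le
      have h0 : 0 ≤ N (γ : G) ^ (-σ) := Real.rpow_nonneg (hNpos _).le _
      calc C * N g ^ σ * N (γ : G) ^ (-σ)
          ≤ C * N y₀ ^ σ * N (γ : G) ^ (-σ) := by
            exact mul_le_mul_of_nonneg_right
              (mul_le_mul_of_nonneg_left this hC.le) h0
        _ = C * N y₀ ^ σ * N (γ : G) ^ (-σ) := rfl
  -- Part 3: growth bound
  · set S : ℝ := ∑' γ : Γ, N (γ : G) ^ (-σ) with hSdef
    have hS1 : 1 ≤ S := by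
      have := Summable.le_tsum hkey (1 : Γ) (fun γ _ => Real.rpow_nonneg (hNpos _).le _)
      simpa [hN1] using this
    refine ⟨C * S, mul_pos hC (lt_of_lt_of_le one_pos hS1), ?_⟩
    intro g
    calc ‖∑' γ : Γ, f ((γ : G) * g)‖
        ≤ ∑' γ : Γ, ‖f ((γ : G) * g)‖ := norm_tsum_le_tsum_norm (part1 g)
      _ ≤ ∑' γ : Γ, C * N g ^ σ * N (γ : G) ^ (-σ) :=
          Summable.tsum_le_tsum (hterm g) (part1 g) (hkey.mul_left _)
      _ = C * N g ^ σ * S := tsum_mul_left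
      _ = C * S * N g ^ σ := by ring
end

section
/- (Perron-type contour integral, main term) For real θ > 0, σ > 0, integer ℓ ≥ 1, and X > 0, the absolutely convergent contour integral (1/2πi) ∫_{σ - i∞}^{σ + i∞} e^{sX} / (s(s+θ)(s+2θ)⋯(s+ℓθ)) ds equals (1 - e^{-θX})^ℓ / (ℓ! · θ^ℓ). -/
open MeasureTheory Complex
open Set Filter FourierTransform

lemma lapInt (θ : ℝ) (hθ : 0 < θ) (ℓ : ℕ) (c : ℂ) (hc : 0 < c.re) :
    IntegrableOn (fun x : ℝ => Complex.exp (-c * x) * (1 - Complex.exp (-θ * x)) ^ ℓ)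
      (Ioi 0) := by
  apply Integrable.mono' ((exp_neg_integrableOn_Ioi 0 hc).const_mul (2 ^ ℓ))
  · exact ((Complex.continuous_exp.comp (by continuity)).mul
      ((continuous_const.sub (Complex.continuous_exp.comp (by continuity))).pow ℓ)).aestronglyMeasurable.restrict
  · filter_upwards [ae_restrict_mem measurableSet_Ioi] with x hx
    rw [norm_mul, norm_pow]
    have h1 : ‖Complex.exp (-c * x)‖ = Real.exp (-c.re * x) := by
      rw [Complex.norm_exp]
      congr 1
      simp [Complex.mul_re]
    have h2 : ‖(1 : ℂ) - Complex.exp (-θ * x)‖ ≤ 2 := by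
      have : ‖Complex.exp (-θ * x)‖ ≤ 1 := by
        rw [Complex.norm_exp]
        apply Real.exp_le_one_iff.mpr
        simp only [Complex.mul_re, Complex.ofReal_re, Complex.neg_re, Complex.ofReal_im,
          Complex.neg_im]
        nlinarith [le_of_lt (mem_Ioi.mp hx), hθ.le]
      calc ‖(1 : ℂ) - Complex.exp (-θ * x)‖ ≤ ‖(1:ℂ)‖ + ‖Complex.exp (-θ * x)‖ :=
            norm_sub_le _ _
        _ ≤ 1 + 1 := by simpa using this
        _ = 2 := by norm_num
    calc ‖Complex.exp (-c * x)‖ * ‖(1:ℂ) - Complex.exp (-θ*x)‖ ^ ℓ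
        ≤ Real.exp (-c.re * x) * 2 ^ ℓ := by
          rw [h1]
          exact mul_le_mul_of_nonneg_left (pow_le_pow_left₀ (norm_nonneg _) h2 ℓ)
            (Real.exp_pos _).le
      _ = 2 ^ ℓ * Real.exp (-c.re * x) := by ring


lemma lap0 (c : ℂ) (hc : 0 < c.re) :
    ∫ x : ℝ in Ioi 0, Complex.exp (-c * x) = 1 / c := by
  have hc0 : c ≠ 0 := fun h => by simp [h] at hc
  have hint : IntegrableOn (fun x : ℝ => Complex.exp (-c * x)) (Ioi 0) := by
    simpa using lapInt 1 one_pos 0 c hc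
  have h1 : Tendsto (fun b : ℝ => ∫ x in (0:ℝ)..b, Complex.exp (-c * x)) atTop
      (nhds (∫ x : ℝ in Ioi 0, Complex.exp (-c * x))) :=
    intervalIntegral_tendsto_integral_Ioi 0 hint tendsto_id
  have h2 : Tendsto (fun b : ℝ => ∫ x in (0:ℝ)..b, Complex.exp (-c * x)) atTop
      (nhds (1 / c)) := by
    have heq : ∀ b : ℝ, (∫ x in (0:ℝ)..b, Complex.exp (-c * x))
        = (Complex.exp (-c * b) - 1) / (-c) := by
      intro b
      rw [integral_exp_mul_complex (neg_ne_zero.mpr hc0)]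
      simp
    simp_rw [heq]
    have : Tendsto (fun b : ℝ => Complex.exp (-c * b)) atTop (nhds 0) := by
      rw [tendsto_zero_iff_norm_tendsto_zero]
      have : ∀ b : ℝ, ‖Complex.exp (-c * b)‖ = Real.exp (-c.re * b) := by
        intro b
        rw [Complex.norm_exp]; congr 1; simp [Complex.mul_re]
      simp_rw [this]
      exact Real.tendsto_exp_atBot.comp (tendsto_id.const_mul_atTop_of_neg (by linarith) |>.mono_right le_rfl)
    have h3 : Tendsto (fun b : ℝ => (Complex.exp (-c * b) - 1) / (-c)) atTop
        (nhds ((0 - 1) / (-c))) :=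
      (this.sub (tendsto_const_nhds (x := (1:ℂ)))).div_const (-c)
    simpa [div_neg, neg_div] using h3
  have := tendsto_nhds_unique h1 h2
  rw [this]

lemma prod_ne (θ : ℝ) (hθ : 0 < θ) (n : ℕ) (c : ℂ) (hc : 0 < c.re) :
    (∏ m ∈ Finset.range n, (c + m * θ)) ≠ 0 := by
  rw [Finset.prod_ne_zero_iff]
  intro m _
  intro h
  have : (c + m * θ).re = c.re + m * θ := by simp
  rw [h] at this
  simp only [Complex.zero_re] at this
  nlinarith [Nat.cast_nonneg (α := ℝ) m]


lemma lapL (θ : ℝ) (hθ : 0 < θ) : ∀ ℓ : ℕ, ∀ c : ℂ, 0 < c.re →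
    (∫ x : ℝ in Ioi 0, Complex.exp (-c * x) * (1 - Complex.exp (-θ * x)) ^ ℓ)
      = ((ℓ.factorial * θ ^ ℓ : ℝ) : ℂ) / ∏ m ∈ Finset.range (ℓ + 1), (c + m * θ) := by
  intro ℓ
  induction ℓ with
  | zero =>
    intro c hc
    simp only [pow_zero, mul_one, Nat.factorial_zero, Nat.cast_one]
    rw [lap0 c hc]
    simp
  | succ ℓ ih =>
    intro c hc
    have hcθ : 0 < (c + θ).re := by simp; linarith
    have hsplit : ∀ x : ℝ, x ∈ Ioi (0:ℝ) →
        Complex.exp (-c * x) * (1 - Complex.exp (-θ * x)) ^ (ℓ + 1)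
          = Complex.exp (-c * x) * (1 - Complex.exp (-θ * x)) ^ ℓ
            - Complex.exp (-(c + θ) * x) * (1 - Complex.exp (-θ * x)) ^ ℓ := by
      intro x _
      have he : Complex.exp (-(c + θ) * x) = Complex.exp (-c * x) * Complex.exp (-θ * x) := by
        rw [← Complex.exp_add]
        congr 1
        push_cast
        ring
      rw [he, pow_succ]
      ring
    rw [setIntegral_congr_fun measurableSet_Ioi hsplit,
      integral_sub (lapInt θ hθ ℓ c hc) (lapInt θ hθ ℓ (c + θ) hcθ), ih c hc, ih (c + θ) hcθ]
    -- algebra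
    have hP := prod_ne θ hθ (ℓ + 1) c hc
    have hQ := prod_ne θ hθ (ℓ + 1) (c + θ) hcθ
    have hR := prod_ne θ hθ (ℓ + 2) c hc
    have hR1 : (∏ m ∈ Finset.range (ℓ + 2), (c + m * θ))
        = (c + (ℓ + 1 : ℕ) * θ) * ∏ m ∈ Finset.range (ℓ + 1), (c + m * θ) := by
      rw [Finset.prod_range_succ]; ring
    have hR2 : (∏ m ∈ Finset.range (ℓ + 2), (c + m * θ))
        = c * ∏ m ∈ Finset.range (ℓ + 1), (c + θ + m * θ) := by
      rw [Finset.prod_range_succ']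
      have : ∀ i ∈ Finset.range (ℓ + 1), (c + ((i + 1 : ℕ) : ℂ) * θ) = (c + θ + i * θ) := by
        intro i _; push_cast; ring
      rw [Finset.prod_congr rfl this]
      push_cast
      ring
    rw [div_sub_div _ _ hP hQ, div_eq_div_iff (mul_ne_zero hP hQ) hR]
    rw [hR1]
    have h : (c + ((ℓ + 1 : ℕ) : ℂ) * θ) * ∏ m ∈ Finset.range (ℓ + 1), (c + m * θ)
        = c * ∏ m ∈ Finset.range (ℓ + 1), (c + θ + m * θ) := by rw [← hR1, hR2]
    push_cast [Nat.factorial_succ] at h ⊢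
    linear_combination (-(((ℓ.factorial : ℂ) * (θ : ℂ) ^ ℓ) * ∏ m ∈ Finset.range (ℓ + 1), (c + m * θ))) * h



lemma Dbound (θ σ : ℝ) (hθ : 0 < θ) (hσ : 0 < σ) (k : ℕ) (t : ℝ) :
    σ ^ k * (σ ^ 2 + t ^ 2) ≤ ‖∏ m ∈ Finset.range (k + 1 + 1), ((σ:ℂ) + t * I + m * θ)‖ := by
  rw [norm_prod]
  have hkey : ∀ m ∈ Finset.range (k + 1 + 1),
      (if m < 2 then Real.sqrt (σ ^ 2 + t ^ 2) else σ) ≤ ‖(σ:ℂ) + t * I + m * θ‖ := by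
    intro m _
    have hre : ((σ:ℂ) + t * I + m * θ).re = σ + m * θ := by simp
    have him : ((σ:ℂ) + t * I + m * θ).im = t := by simp
    by_cases hm : m < 2
    · simp only [hm, if_true]
      rw [Complex.norm_def, Complex.normSq_apply, hre, him]
      apply Real.sqrt_le_sqrt
      have hmθ : 0 ≤ (m:ℝ) * θ := by positivity
      nlinarith [hmθ, hσ]
    · simp only [hm, if_false]
      calc σ ≤ σ + m * θ := le_add_of_nonneg_right (by positivity)
        _ ≤ |((σ:ℂ) + t * I + m * θ).re| := by rw [hre]; exact le_abs_self _
        _ ≤ ‖(σ:ℂ) + t * I + m * θ‖ := Complex.abs_re_le_norm _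
  refine le_trans (le_of_eq ?_) (Finset.prod_le_prod (fun m _ => ?_) hkey)
  · rw [Finset.prod_range_succ', Finset.prod_range_succ']
    have h2 : ∀ i : ℕ, (if i + 1 + 1 < 2 then Real.sqrt (σ ^ 2 + t ^ 2) else σ) = σ := by
      intro i; simp
    simp only [h2]
    rw [Finset.prod_const, Finset.card_range]
    have h0 : (if 0 < 2 then Real.sqrt (σ ^ 2 + t ^ 2) else σ) = Real.sqrt (σ ^ 2 + t ^ 2) := by
      norm_num
    have h1 : (if 0 + 1 < 2 then Real.sqrt (σ ^ 2 + t ^ 2) else σ) = Real.sqrt (σ ^ 2 + t ^ 2) := by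
      norm_num
    rw [h0, h1, mul_assoc, Real.mul_self_sqrt (by positivity)]
  · by_cases hm : m < 2 <;> simp [hm, Real.sqrt_nonneg, hσ.le]

/-- Perron-type contour integral, main term.  For `θ, σ, X > 0` and `ℓ ≥ 1`,
`(1/2πi) ∫_{σ-i∞}^{σ+i∞} e^{sX} / (s(s+θ)⋯(s+ℓθ)) ds = (1 - e^{-θX})^ℓ/(ℓ! θ^ℓ)`,
the integral converging absolutely.  Parametrizing `s = σ + it`, `ds = i dt`, the
integral is `(1/2π) ∫_ℝ`. -/
theorem perron_integral_main_term
    (θ σ X : ℝ) (hθ : 0 < θ) (hσ : 0 < σ) (hX : 0 < X) (ℓ : ℕ) (hℓ : 1 ≤ ℓ) :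
    Integrable (fun t : ℝ =>
      Complex.exp ((σ + t * I) * X) /
        ∏ m ∈ Finset.range (ℓ + 1), (σ + t * I + m * θ)) ∧
    (1 / (2 * Real.pi) : ℂ) *
        ∫ t : ℝ, Complex.exp ((σ + t * I) * X) /
          ∏ m ∈ Finset.range (ℓ + 1), (σ + t * I + m * θ) =
      ((1 - Real.exp (-θ * X)) ^ ℓ / (ℓ.factorial * θ ^ ℓ) : ℝ) := by
  obtain ⟨k, rfl⟩ : ∃ k, ℓ = k + 1 := ⟨ℓ - 1, (Nat.succ_pred_eq_of_pos hℓ).symm⟩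
  set D : ℝ → ℂ := fun t => ∏ m ∈ Finset.range (k + 1 + 1), ((σ:ℂ) + t * I + m * θ) with hD
  set K : ℂ := (((k+1).factorial * θ ^ (k+1) : ℝ) : ℂ) with hKdef
  have hK0 : K ≠ 0 := by
    rw [hKdef]
    exact_mod_cast Complex.ofReal_ne_zero.mpr (by positivity)
  have hcre : ∀ t : ℝ, 0 < ((σ:ℂ) + t * I).re := by intro t; simp [hσ]
  have hDt : ∀ t : ℝ, D t ≠ 0 := fun t => prod_ne θ hθ (k + 1 + 1) ((σ:ℂ) + t * I) (hcre t)
  set C : ℝ := (σ ^ k)⁻¹ * max 1 (σ ^ 2)⁻¹ with hCdef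
  -- bound on the inverse of D
  have hb : ∀ t : ℝ, ‖(D t)⁻¹‖ ≤ C * (1 + t ^ 2)⁻¹ := by
    intro t
    have hDlb := Dbound θ σ hθ hσ k t
    have hpos : 0 < σ ^ k * (σ ^ 2 + t ^ 2) := by positivity
    have h1t : (0:ℝ) < 1 + t ^ 2 := by positivity
    have hst : (0:ℝ) < σ ^ 2 + t ^ 2 := by positivity
    rw [norm_inv]
    calc ‖D t‖⁻¹ ≤ (σ ^ k * (σ ^ 2 + t ^ 2))⁻¹ := by
          apply inv_anti₀ hpos hDlb
      _ ≤ C * (1 + t ^ 2)⁻¹ := by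
          rw [mul_inv, hCdef, mul_assoc]
          gcongr
          have key : (σ ^ 2 + t ^ 2)⁻¹ * (1 + t ^ 2) ≤ max 1 (σ ^ 2)⁻¹ := by
            rw [inv_mul_le_iff₀ hst]
            have hm1 : (1:ℝ) ≤ max 1 (σ ^ 2)⁻¹ * σ ^ 2 := by
              calc (1:ℝ) = (σ ^ 2)⁻¹ * σ ^ 2 := by field_simp
                _ ≤ max 1 (σ ^ 2)⁻¹ * σ ^ 2 := by gcongr; exact le_max_right _ _
            have hm2 : t ^ 2 ≤ max 1 (σ ^ 2)⁻¹ * t ^ 2 :=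
              le_mul_of_one_le_left (sq_nonneg t) (le_max_left _ _)
            nlinarith [hm1, hm2]
          calc (σ ^ 2 + t ^ 2)⁻¹ = ((σ ^ 2 + t ^ 2)⁻¹ * (1 + t ^ 2)) * (1 + t ^ 2)⁻¹ := by
                field_simp
            _ ≤ max 1 (σ ^ 2)⁻¹ * (1 + t ^ 2)⁻¹ := by gcongr
  have hDcont : Continuous D := continuous_finset_prod _ fun m _ =>
    (continuous_const.add (Complex.continuous_ofReal.mul continuous_const)).add continuous_const
  have hGcont : Continuous fun t : ℝ => (D t)⁻¹ := hDcont.inv₀ hDt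
  set f : ℝ → ℂ :=
    fun x : ℝ => Complex.exp (-(σ:ℂ) * x) * (1 - Complex.exp (-(θ:ℂ) * x)) ^ (k+1) with hf
  set φ : ℝ → ℂ := (Ioi (0:ℝ)).indicator f with hφ
  have hσc : 0 < ((σ:ℂ)).re := by simp [hσ]
  have hφint : Integrable φ :=
    (lapInt θ hθ (k+1) (σ:ℂ) hσc).integrable_indicator measurableSet_Ioi
  have hFT : ∀ ξ : ℝ, 𝓕 φ ξ = K / D (2 * Real.pi * ξ) := by
    intro ξ
    rw [Real.fourier_eq']
    simp only [RCLike.inner_apply', conj_trivial, smul_eq_mul]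
    have hpt : ∀ x : ℝ, Complex.exp (((-2 * Real.pi * (x * ξ) : ℝ) : ℂ) * I) * φ x
        = (Ioi (0:ℝ)).indicator (fun x : ℝ =>
            Complex.exp (-((σ:ℂ) + ((2 * Real.pi * ξ : ℝ) : ℂ) * I) * x)
              * (1 - Complex.exp (-(θ:ℂ) * x)) ^ (k+1)) x := by
      intro x
      by_cases hx : x ∈ Ioi (0:ℝ)
      · rw [hφ, indicator_of_mem hx, indicator_of_mem hx, hf, ← mul_assoc, ← Complex.exp_add]
        congr 2
        push_cast
        ring
      · simp [hφ, indicator_of_notMem hx]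
    simp_rw [hpt]
    rw [integral_indicator measurableSet_Ioi]
    rw [lapL θ hθ (k+1) ((σ:ℂ) + ((2 * Real.pi * ξ : ℝ):ℂ) * I) (by simp [hσ])]
  have hC0 : 0 ≤ C := by rw [hCdef]; positivity
  have h𝓕int : Integrable (𝓕 φ) := by
    have hInt2 : Integrable fun ξ : ℝ => K / D (2 * Real.pi * ξ) := by
      apply Integrable.mono' (integrable_inv_one_add_sq.const_mul (‖K‖ * C))
      · exact (continuous_const.div (hDcont.comp (continuous_const.mul continuous_id)) fun ξ => hDt _).aestronglyMeasurable
      · refine ae_of_all _ fun ξ => ?_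
        have h1 : ‖K / D (2 * Real.pi * ξ)‖ = ‖K‖ * ‖(D (2 * Real.pi * ξ))⁻¹‖ := by
          rw [div_eq_mul_inv, norm_mul]
        have h3 : (1 + (2 * Real.pi * ξ) ^ 2)⁻¹ ≤ (1 + ξ ^ 2)⁻¹ := by
          apply inv_anti₀ (by positivity)
          nlinarith [sq_nonneg ξ,
            mul_nonneg (by nlinarith [Real.pi_gt_three] : (0:ℝ) ≤ 4 * Real.pi ^ 2 - 1)
              (sq_nonneg ξ)]
        rw [h1]
        calc ‖K‖ * ‖(D (2 * Real.pi * ξ))⁻¹‖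
            ≤ ‖K‖ * (C * (1 + (2 * Real.pi * ξ) ^ 2)⁻¹) := by
              gcongr
              exact hb _
          _ ≤ ‖K‖ * (C * (1 + ξ ^ 2)⁻¹) := by gcongr
          _ = ‖K‖ * C * (1 + ξ ^ 2)⁻¹ := by ring
    exact hInt2.congr (ae_of_all _ fun ξ => (hFT ξ).symm)
  have hfcont : Continuous f := by
    rw [hf]
    have c1 : Continuous fun x : ℝ => Complex.exp (-(σ:ℂ) * x) :=
      (continuous_const.mul Complex.continuous_ofReal).cexp
    have c2 : Continuous fun x : ℝ => Complex.exp (-(θ:ℂ) * x) :=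
      (continuous_const.mul Complex.continuous_ofReal).cexp
    exact c1.mul ((continuous_const.sub c2).pow _)
  have hφcont : ContinuousAt φ X := by
    have heq : φ =ᶠ[nhds X] f :=
      eventually_of_mem (Ioi_mem_nhds hX) fun y hy => indicator_of_mem hy f
    exact hfcont.continuousAt.congr heq.symm
  have hinv := hφint.fourierInv_fourier_eq h𝓕int hφcont
  rw [Real.fourierInv_eq'] at hinv
  simp only [RCLike.inner_apply', conj_trivial, smul_eq_mul] at hinv
  set H : ℝ → ℂ := fun t => Complex.exp (((t * X : ℝ) : ℂ) * I) * (D t)⁻¹ with hH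
  have hstep : ∀ ξ : ℝ, Complex.exp (((2 * Real.pi * (ξ * X) : ℝ) : ℂ) * I) * 𝓕 φ ξ
      = K * H (2 * Real.pi * ξ) := by
    intro ξ
    rw [hFT ξ, div_eq_mul_inv, hH]
    rw [show (2 * Real.pi * (ξ * X)) = ((2 * Real.pi * ξ) * X) by ring]
    ring
  simp_rw [hstep] at hinv
  rw [MeasureTheory.integral_const_mul, MeasureTheory.Measure.integral_comp_mul_left H (2 * Real.pi),
    abs_of_pos (by positivity : (0:ℝ) < (2 * Real.pi)⁻¹), Complex.real_smul,
    Complex.ofReal_inv, hφ, indicator_of_mem (mem_Ioi.mpr hX)] at hinv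
  -- hinv : K * ((↑(2 * π))⁻¹ * ∫ t, H t) = f X
  have hHint : Integrable H := by
    apply Integrable.mono' (integrable_inv_one_add_sq.const_mul C)
    · have c3 : Continuous fun t : ℝ => Complex.exp (((t * X : ℝ) : ℂ) * I) :=
        ((Complex.continuous_ofReal.comp (continuous_id.mul continuous_const)).mul
          continuous_const).cexp
      exact (c3.mul hGcont).aestronglyMeasurable
    · refine ae_of_all _ fun t => ?_
      rw [hH]
      simp only
      rw [norm_mul]
      have : ‖Complex.exp (((t * X : ℝ) : ℂ) * I)‖ = 1 := by
        exact Complex.norm_exp_ofReal_mul_I _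
      rw [this, one_mul]
      exact hb t
  have hTeq : (fun t : ℝ => Complex.exp ((σ + t * I) * X) /
        ∏ m ∈ Finset.range (k + 1 + 1), (σ + t * I + m * θ))
      = fun t : ℝ => Complex.exp (((σ * X : ℝ) : ℂ)) * H t := by
    funext t
    rw [hH]
    simp only
    rw [div_eq_mul_inv, ← mul_assoc, ← Complex.exp_add]
    congr 2
    push_cast
    ring
  constructor
  · rw [hTeq]
    exact hHint.const_mul _
  · rw [hTeq, MeasureTheory.integral_const_mul]
    have hπ : ((Real.pi : ℂ)) ≠ 0 := Complex.ofReal_ne_zero.mpr Real.pi_ne_zero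
    have hee : Complex.exp (((σ * X : ℝ) : ℂ)) * Complex.exp (-(σ:ℂ) * X) = 1 := by
      rw [← Complex.exp_add]
      rw [show ((σ * X : ℝ) : ℂ) + -(σ:ℂ) * X = 0 by push_cast; ring]
      exact Complex.exp_zero
    have hRHS : (((1 - Real.exp (-θ * X)) ^ (k+1) / ((k+1).factorial * θ ^ (k+1)) : ℝ) : ℂ)
        = (1 - Complex.exp (-(θ:ℂ) * X)) ^ (k+1) / K := by
      rw [hKdef]
      push_cast
      ring
    rw [hRHS]
    have hI : ((2 * (Real.pi : ℂ)))⁻¹ * ∫ t, H t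
        = (Complex.exp (-(σ:ℂ) * X) * (1 - Complex.exp (-(θ:ℂ) * X)) ^ (k+1)) / K := by
      rw [eq_div_iff hK0]
      rw [hf] at hinv
      simp only at hinv
      push_cast at hinv ⊢
      linear_combination hinv
    calc (1 / (2 * (Real.pi : ℂ))) * (Complex.exp (((σ * X : ℝ) : ℂ)) * ∫ t, H t)
        = Complex.exp (((σ * X : ℝ) : ℂ)) * ((2 * (Real.pi : ℂ))⁻¹ * ∫ t, H t) := by ring
      _ = Complex.exp (((σ * X : ℝ) : ℂ)) *
            ((Complex.exp (-(σ:ℂ) * X) * (1 - Complex.exp (-(θ:ℂ) * X)) ^ (k+1)) / K) := by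
          rw [hI]
      _ = (Complex.exp (((σ * X : ℝ) : ℂ)) * Complex.exp (-(σ:ℂ) * X))
            * (1 - Complex.exp (-(θ:ℂ) * X)) ^ (k+1) / K := by ring
      _ = (1 - Complex.exp (-(θ:ℂ) * X)) ^ (k+1) / K := by rw [hee, one_mul]
end
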